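/- arXiv:2311.14044 — 5 statements merged into one kernel-verified Lean document; each statement's English description precedes it below -/
import Mathlib

section
/- Let T be an m × n complex matrix with Tᴴ T = 1 (an isometry), and let S be an m × m complex matrix with Sᴴ = S and S·S = 1 (a Hermitian involution). Let x ∈ ℂⁿ be a unit vector (⟨x, x⟩ = 1) and λ ∈ ℝ with λ² < 1 such that Tᴴ S T x = λ x. Define u := T x and v := (√(1−λ²))⁻¹ • (S u − λ u). Then {u, v} is an orthonormal pair: ⟨u, u⟩ = 1, ⟨v, v⟩ = 1 and ⟨u, v⟩ = 0, where ⟨·,·⟩ is the standard Hermitian inner product on ℂᵐ (conjugate-linear in the first argument). -/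
open Matrix

/-- In the quantum-walk construction, `u = T x` and the normalized component
`v = (√(1-λ²))⁻¹ (S u - λ u)` form an orthonormal pair. -/
theorem walk_orthonormal_pair {m n : ℕ} (T : Matrix (Fin m) (Fin n) ℂ)
    (hT : Tᴴ * T = 1) (S : Matrix (Fin m) (Fin m) ℂ) (hS : Sᴴ = S) (hS2 : S * S = 1)
    (x : Fin n → ℂ) (hx : ∑ i, starRingEnd ℂ (x i) * x i = 1)
    (lam : ℝ) (hlam : lam ^ 2 < 1) (heig : (Tᴴ * S * T).mulVec x = (lam : ℂ) • x)
    (u v : Fin m → ℂ) (hu : u = T.mulVec x)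
    (hv : v = ((Real.sqrt (1 - lam ^ 2) : ℂ))⁻¹ • (S.mulVec u - (lam : ℂ) • u)) :
    (∑ i, starRingEnd ℂ (u i) * u i = 1) ∧
      (∑ i, starRingEnd ℂ (v i) * v i = 1) ∧
      (∑ i, starRingEnd ℂ (u i) * v i = 0) := by
  have hxx : star x ⬝ᵥ x = 1 := hx
  have huu : star u ⬝ᵥ u = 1 := by
    rw [hu, star_mulVec, dotProduct_mulVec, vecMul_vecMul, hT, vecMul_one, hxx]
  have hus : star u ⬝ᵥ S.mulVec u = (lam : ℂ) := by
    rw [hu, star_mulVec, mulVec_mulVec, dotProduct_mulVec, vecMul_vecMul,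
      ← Matrix.mul_assoc, ← dotProduct_mulVec, heig, dotProduct_smul, hxx, smul_eq_mul, mul_one]
  have hsu : star (S.mulVec u) ⬝ᵥ u = (lam : ℂ) := by
    rw [star_mulVec, ← dotProduct_mulVec, hS, hus]
  have hss : star (S.mulVec u) ⬝ᵥ S.mulVec u = 1 := by
    rw [star_mulVec, hS, ← dotProduct_mulVec, mulVec_mulVec, hS2, one_mulVec, huu]
  have h0 : (0:ℝ) ≤ 1 - lam ^ 2 := by linarith
  set c : ℂ := ((Real.sqrt (1 - lam ^ 2) : ℂ)) with hc
  have hcc : c * c = (1 : ℂ) - (lam:ℂ) ^ 2 := by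
    rw [hc, ← Complex.ofReal_mul, Real.mul_self_sqrt h0]
    push_cast; ring
  have hcne : c ≠ 0 := by
    rw [hc]
    simpa using (Real.sqrt_ne_zero'.2 (by linarith)).symm ∘ Eq.symm ∘ Complex.ofReal_inj.mp
  have hcstar : star c = c := by rw [hc]; simp [Complex.conj_ofReal]
  refine ⟨huu, ?_, ?_⟩
  · have : star v ⬝ᵥ v = 1 := by
      rw [hv]
      rw [star_smul, smul_dotProduct, dotProduct_smul, star_inv₀, hcstar]
      rw [star_sub, star_smul, sub_dotProduct, dotProduct_sub, dotProduct_sub,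
        smul_dotProduct, smul_dotProduct, dotProduct_smul, dotProduct_smul]
      rw [hss, hsu, hus, huu, Complex.star_def, Complex.conj_ofReal]
      field_simp
      have hne : (1:ℂ) - (lam:ℂ) ^ 2 ≠ 0 := by rw [← hcc]; exact mul_ne_zero hcne hcne
      simp only [smul_eq_mul, mul_one]
      rw [← mul_assoc, div_mul_div_comm, mul_one, hcc, div_mul_eq_mul_div, one_mul, div_eq_one_iff_eq hne]; ring
    exact this
  · have : star u ⬝ᵥ v = 0 := by
      rw [hv, dotProduct_smul, dotProduct_sub, dotProduct_smul, hus, huu]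
      simp
    exact this
end

section
/- Let T be an m × n complex matrix with Tᴴ T = 1 (an isometry), and let S be an m × m complex matrix with Sᴴ = S and S·S = 1 (a Hermitian involution). Let x ∈ ℂⁿ be a unit vector (⟨x, x⟩ = 1) and λ ∈ ℝ with λ² < 1 such that Tᴴ S T x = λ x. Define the walk operator W := S(2·T·Tᴴ − 1), u := T x and v := (√(1−λ²))⁻¹ • (S u − λ u). Then W u = λ • u + √(1−λ²) • v. -/
open Matrix

/-- First column of the block form of the walk operator `W = S(2TTᴴ - 1)` on the invariant
subspace spanned by `u = T x` and `v`: `W u = λ u + √(1-λ²) v`. -/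
theorem walk_operator_apply_u {m n : ℕ} (T : Matrix (Fin m) (Fin n) ℂ)
    (hT : Tᴴ * T = 1) (S : Matrix (Fin m) (Fin m) ℂ) (hS : Sᴴ = S) (hS2 : S * S = 1)
    (x : Fin n → ℂ) (hx : ∑ i, starRingEnd ℂ (x i) * x i = 1)
    (lam : ℝ) (hlam : lam ^ 2 < 1) (heig : (Tᴴ * S * T).mulVec x = (lam : ℂ) • x)
    (W : Matrix (Fin m) (Fin m) ℂ) (hW : W = S * ((2 : ℂ) • (T * Tᴴ) - 1))
    (u v : Fin m → ℂ) (hu : u = T.mulVec x)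
    (hv : v = ((Real.sqrt (1 - lam ^ 2) : ℂ))⁻¹ • (S.mulVec u - (lam : ℂ) • u)) :
    W.mulVec u = (lam : ℂ) • u + (Real.sqrt (1 - lam ^ 2) : ℂ) • v := by
  have hc : ((Real.sqrt (1 - lam ^ 2) : ℂ)) ≠ 0 := by
    have : (0:ℝ) < Real.sqrt (1 - lam ^ 2) := Real.sqrt_pos.mpr (by linarith)
    exact_mod_cast this.ne'
  have hWT : W * T = S * T := by
    rw [hW, Matrix.mul_assoc, Matrix.sub_mul, Matrix.one_mul, Matrix.smul_mul,
      Matrix.mul_assoc T, hT, Matrix.mul_one, two_smul, add_sub_cancel_right]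
  have hLHS : W.mulVec u = S.mulVec u := by
    rw [hu, mulVec_mulVec, hWT, ← mulVec_mulVec]
  rw [hLHS, hv, smul_inv_smul₀ hc]
  ring_nf
end

section
/- Let T be an m × n complex matrix with Tᴴ T = 1 (an isometry), and let S be an m × m complex matrix with Sᴴ = S and S·S = 1 (a Hermitian involution). Let x ∈ ℂⁿ be a unit vector (⟨x, x⟩ = 1) and λ ∈ ℝ with λ² < 1 such that Tᴴ S T x = λ x. Define the walk operator W := S(2·T·Tᴴ − 1), u := T x and v := (√(1−λ²))⁻¹ • (S u − λ u). Then W v = −√(1−λ²) • u + λ • v. -/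
open Matrix

/-- Second column of the block form of the walk operator `W = S(2TTᴴ - 1)` on the invariant
subspace spanned by `u = T x` and `v`: `W v = -√(1-λ²) u + λ v`. -/
theorem walk_operator_apply_v {m n : ℕ} (T : Matrix (Fin m) (Fin n) ℂ)
    (hT : Tᴴ * T = 1) (S : Matrix (Fin m) (Fin m) ℂ) (hS : Sᴴ = S) (hS2 : S * S = 1)
    (x : Fin n → ℂ) (hx : ∑ i, starRingEnd ℂ (x i) * x i = 1)
    (lam : ℝ) (hlam : lam ^ 2 < 1) (heig : (Tᴴ * S * T).mulVec x = (lam : ℂ) • x)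
    (W : Matrix (Fin m) (Fin m) ℂ) (hW : W = S * ((2 : ℂ) • (T * Tᴴ) - 1))
    (u v : Fin m → ℂ) (hu : u = T.mulVec x)
    (hv : v = ((Real.sqrt (1 - lam ^ 2) : ℂ))⁻¹ • (S.mulVec u - (lam : ℂ) • u)) :
    W.mulVec v = -((Real.sqrt (1 - lam ^ 2) : ℂ)) • u + (lam : ℂ) • v := by
  have h0 : (0:ℝ) ≤ 1 - lam ^ 2 := by linarith
  set c : ℂ := (Real.sqrt (1 - lam ^ 2) : ℂ) with hcdef
  have hc2 : c ^ 2 = 1 - (lam:ℂ) ^ 2 := by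
    rw [hcdef]
    norm_cast
    rw [sq, Real.mul_self_sqrt h0]
  have hcne : c ≠ 0 := by
    rw [hcdef]
    exact Complex.ofReal_ne_zero.mpr (ne_of_gt (Real.sqrt_pos.mpr (by linarith)))
  have hTu : Tᴴ.mulVec u = x := by
    rw [hu, mulVec_mulVec, hT, one_mulVec]
  have hTTu : (T * Tᴴ).mulVec u = u := by
    rw [← mulVec_mulVec, hTu, hu]
  have hTSu : Tᴴ.mulVec (S.mulVec u) = (lam:ℂ) • x := by
    rw [hu, mulVec_mulVec, mulVec_mulVec]
    exact heig
  have hTTSu : (T * Tᴴ).mulVec (S.mulVec u) = (lam:ℂ) • u := by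
    rw [← mulVec_mulVec, hTSu, mulVec_smul, hu]
  have hWu : W.mulVec u = S.mulVec u := by
    rw [hW, ← mulVec_mulVec, sub_mulVec, smul_mulVec, hTTu, one_mulVec]
    congr 1
    rw [two_smul, add_sub_cancel_right]
  have hWSu : W.mulVec (S.mulVec u) = (2 * lam : ℂ) • S.mulVec u - u := by
    rw [hW, ← mulVec_mulVec, sub_mulVec, smul_mulVec, hTTSu, one_mulVec,
      mulVec_sub, mulVec_smul, mulVec_smul, mulVec_mulVec, hS2, one_mulVec, smul_smul]
  rw [hv, mulVec_smul, mulVec_sub, mulVec_smul, hWu, hWSu]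
  funext i
  simp only [Pi.smul_apply, Pi.sub_apply, Pi.add_apply, Pi.neg_apply, smul_eq_mul]
  field_simp
  linear_combination (u i) * hc2
end

section
/- Let T be an m × n complex matrix with Tᴴ T = 1 (an isometry), and let S be an m × m complex matrix with Sᴴ = S and S·S = 1 (a Hermitian involution). Let x ∈ ℂⁿ be a unit vector (⟨x, x⟩ = 1) and λ ∈ ℝ with λ² < 1 such that Tᴴ S T x = λ x. Define the walk operator W := S(2·T·Tᴴ − 1), u := T x and v := (√(1−λ²))⁻¹ • (S u − λ u). Then for every natural number k ≥ 1: Wᵏ u = Tₖ(λ) • u + √(1−λ²)·Uₖ₋₁(λ) • v and Wᵏ v = −√(1−λ²)·Uₖ₋₁(λ) • u + Tₖ(λ) • v, where Tₖ and Uₖ are the Chebyshev polynomials of the first and second kind evaluated at λ. -/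
open Matrix

private lemma chebT_rec (j : ℤ) (x : ℝ) :
    (Polynomial.Chebyshev.T ℝ (j + 1)).eval x =
      x * (Polynomial.Chebyshev.T ℝ j).eval x -
        (1 - x ^ 2) * (Polynomial.Chebyshev.U ℝ (j - 1)).eval x := by
  have h := Polynomial.Chebyshev.T_eq_X_mul_T_sub_pol_U ℝ (j - 1)
  rw [show j - 1 + 2 = j + 1 by ring, show j - 1 + 1 = j by ring] at h
  rw [h]
  simp [Polynomial.eval_sub, Polynomial.eval_mul]

private lemma chebU_rec (j : ℤ) (x : ℝ) :
    (Polynomial.Chebyshev.U ℝ j).eval x =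
      x * (Polynomial.Chebyshev.U ℝ (j - 1)).eval x +
        (Polynomial.Chebyshev.T ℝ j).eval x := by
  have h := Polynomial.Chebyshev.U_eq_X_mul_U_add_T ℝ (j - 1)
  rw [show j - 1 + 1 = j by ring] at h
  rw [h]
  simp [Polynomial.eval_add, Polynomial.eval_mul]

/-- Block form of powers of the walk operator: within the invariant subspace spanned by
`u = T x` and `v`, `Wᵏ` acts as `[[Tₖ(λ), -√(1-λ²)Uₖ₋₁(λ)],[√(1-λ²)Uₖ₋₁(λ), Tₖ(λ)]]`
for every `k ≥ 1`. -/
theorem walk_operator_power_block_form {m n : ℕ} (T : Matrix (Fin m) (Fin n) ℂ)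
    (hT : Tᴴ * T = 1) (S : Matrix (Fin m) (Fin m) ℂ) (hS : Sᴴ = S) (hS2 : S * S = 1)
    (x : Fin n → ℂ) (hx : ∑ i, starRingEnd ℂ (x i) * x i = 1)
    (lam : ℝ) (hlam : lam ^ 2 < 1) (heig : (Tᴴ * S * T).mulVec x = (lam : ℂ) • x)
    (W : Matrix (Fin m) (Fin m) ℂ) (hW : W = S * ((2 : ℂ) • (T * Tᴴ) - 1))
    (u v : Fin m → ℂ) (hu : u = T.mulVec x)
    (hv : v = ((Real.sqrt (1 - lam ^ 2) : ℂ))⁻¹ • (S.mulVec u - (lam : ℂ) • u)) :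
    ∀ k : ℕ, 1 ≤ k →
      (W ^ k).mulVec u =
          (((Polynomial.Chebyshev.T ℝ (k : ℤ)).eval lam : ℝ) : ℂ) • u +
            ((Real.sqrt (1 - lam ^ 2) *
                (Polynomial.Chebyshev.U ℝ ((k : ℤ) - 1)).eval lam : ℝ) : ℂ) • v ∧
        (W ^ k).mulVec v =
          -((Real.sqrt (1 - lam ^ 2) *
                (Polynomial.Chebyshev.U ℝ ((k : ℤ) - 1)).eval lam : ℝ) : ℂ) • u +
            (((Polynomial.Chebyshev.T ℝ (k : ℤ)).eval lam : ℝ) : ℂ) • v := by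
  set c : ℝ := Real.sqrt (1 - lam ^ 2) with hc
  have h1l : (0:ℝ) < 1 - lam ^ 2 := by linarith
  have hcpos : 0 < c := Real.sqrt_pos.mpr h1l
  have hc2 : c ^ 2 = 1 - lam ^ 2 := Real.sq_sqrt h1l.le
  have hcC : (c : ℂ) ≠ 0 := by exact_mod_cast hcpos.ne'
  -- basic mulVec facts
  have hTHu : Tᴴ.mulVec u = x := by
    rw [hu, mulVec_mulVec, hT, one_mulVec]
  have hTTHu : (T * Tᴴ).mulVec u = u := by
    rw [← mulVec_mulVec, hTHu, ← hu]
  have hc2C : (c:ℂ) * (c:ℂ) = 1 - (lam:ℂ)^2 := by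
    have h := congrArg (fun t : ℝ => (t:ℂ)) hc2
    push_cast at h
    linear_combination h
  have hSu : S.mulVec u = (lam : ℂ) • u + (c : ℂ) • v := by
    rw [hv, smul_inv_smul₀ hcC]
    module
  have hWu : W.mulVec u = (lam : ℂ) • u + (c : ℂ) • v := by
    have h2 : ((2:ℂ) • (T * Tᴴ) - 1).mulVec u = u := by
      rw [sub_mulVec, smul_mulVec, hTTHu, one_mulVec]
      module
    rw [hW, ← mulVec_mulVec, h2, hSu]
  have hTHv : Tᴴ.mulVec v = 0 := by
    have hTSu : Tᴴ.mulVec (S.mulVec u) = (lam : ℂ) • x := by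
      rw [hu, mulVec_mulVec, mulVec_mulVec, heig]
    rw [hv, mulVec_smul, mulVec_sub, hTSu, mulVec_smul, hTHu, sub_self, smul_zero]
  have hSv : S.mulVec v = (c : ℂ) • u - (lam : ℂ) • v := by
    have hSSu : S.mulVec (S.mulVec u) = u := by rw [mulVec_mulVec, hS2, one_mulVec]
    have h4 : (c:ℂ) • v = S.mulVec u - (lam:ℂ) • u := by
      rw [hv, smul_inv_smul₀ hcC]
    have h5 : (c:ℂ) • S.mulVec v = (c:ℂ) • ((c:ℂ) • u - (lam:ℂ) • v) := by
      rw [← mulVec_smul, h4, mulVec_sub, hSSu, mulVec_smul, hSu]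
      have h3 : (c:ℂ) • ((c:ℂ) • u - (lam:ℂ) • v) = ((c:ℂ)*(c:ℂ)) • u - ((c:ℂ)*(lam:ℂ)) • v := by
        module
      rw [h3, hc2C]
      module
    exact smul_right_injective (Fin m → ℂ) hcC h5
  have hWv : W.mulVec v = -(c : ℂ) • u + (lam : ℂ) • v := by
    have hTTHv : (T * Tᴴ).mulVec v = 0 := by
      rw [← mulVec_mulVec, hTHv, mulVec_zero]
    rw [hW, ← mulVec_mulVec, sub_mulVec, smul_mulVec, hTTHv, one_mulVec, smul_zero,
      zero_sub, mulVec_neg, hSv]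
    module
  -- induction
  intro k hk
  induction k, hk using Nat.le_induction with
  | base =>
    constructor
    · rw [pow_one, hWu]
      norm_num [Polynomial.Chebyshev.T_one, Polynomial.Chebyshev.U_zero]
    · rw [pow_one, hWv]
      norm_num [Polynomial.Chebyshev.T_one, Polynomial.Chebyshev.U_zero]
  | succ k hk ih =>
    obtain ⟨ihu, ihv⟩ := ih
    set a : ℝ := (Polynomial.Chebyshev.T ℝ (k : ℤ)).eval lam with ha
    set b : ℝ := (Polynomial.Chebyshev.U ℝ ((k : ℤ) - 1)).eval lam with hb
    have hTk1 : (Polynomial.Chebyshev.T ℝ ((k:ℤ) + 1)).eval lam = lam * a - (c * b) * c := by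
      rw [chebT_rec (k:ℤ) lam, ← ha, ← hb]
      linear_combination b * hc2
    have hUk : (Polynomial.Chebyshev.U ℝ (k:ℤ)).eval lam = lam * b + a := by
      rw [chebU_rec (k:ℤ) lam, ← ha, ← hb]
    have hpow : ∀ w : Fin m → ℂ, (W ^ (k+1)).mulVec w = W.mulVec ((W ^ k).mulVec w) := by
      intro w; rw [pow_succ', ← mulVec_mulVec]
    have hcast : ((k:ℕ)+1 : ℤ) = (k:ℤ) + 1 := by push_cast; ring
    constructor
    · rw [hpow, ihu, mulVec_add, mulVec_smul, mulVec_smul, hWu, hWv]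
      rw [show (((k+1:ℕ):ℤ)) = (k:ℤ)+1 by push_cast; ring]
      rw [show ((k:ℤ)+1-1) = (k:ℤ) by ring, hTk1, hUk]
      push_cast
      module
    · rw [hpow, ihv, mulVec_add, mulVec_smul, mulVec_smul, hWu, hWv]
      rw [show (((k+1:ℕ):ℤ)) = (k:ℤ)+1 by push_cast; ring]
      rw [show ((k:ℤ)+1-1) = (k:ℤ) by ring, hTk1, hUk]
      push_cast
      module
end

section
/- Let T be an m × n complex matrix with Tᴴ T = 1 (an isometry), and let S be an m × m complex matrix with Sᴴ = S and S·S = 1 (a Hermitian involution). Let x ∈ ℂⁿ be a unit vector (⟨x, x⟩ = 1) and λ ∈ ℝ with λ² < 1 such that Tᴴ S T x = λ x. Define the walk operator W := S(2·T·Tᴴ − 1). Then for every natural number k, Tᴴ (Wᵏ (T x)) = Tₖ(λ) • x, where Tₖ is the k-th Chebyshev polynomial of the first kind evaluated at λ. -/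
open Matrix

/-- Coefficient sequence for the walk acting on the span of `Tx` and `STx`. -/
def chebAux (c : ℂ) : ℕ → ℂ × ℂ
  | 0 => (1, 0)
  | k + 1 => (-(chebAux c k).2, (chebAux c k).1 + 2 * c * (chebAux c k).2)

lemma chebAux_eq (lam : ℝ) (k : ℕ) :
    (chebAux (lam : ℂ) k).1 + (lam : ℂ) * (chebAux (lam : ℂ) k).2
      = (((Polynomial.Chebyshev.T ℝ (k : ℤ)).eval lam : ℝ) : ℂ) := by
  induction k using Nat.twoStepInduction with
  | zero => simp [chebAux]
  | one => simp [chebAux]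
  | more k ih1 ih2 =>
    rw [show ((k + 2 : ℕ) : ℤ) = (k : ℤ) + 2 by push_cast; ring,
      Polynomial.Chebyshev.T_add_two]
    simp only [Polynomial.eval_sub, Polynomial.eval_mul, Polynomial.eval_ofNat,
      Polynomial.eval_X]
    rw [Complex.ofReal_sub, Complex.ofReal_mul, Complex.ofReal_mul,
      Complex.ofReal_ofNat,
      show ((k : ℤ) + 1) = ((k + 1 : ℕ) : ℤ) by push_cast; ring, ← ih1, ← ih2]
    simp only [chebAux]
    ring

/-- Core of the quantum-walk implementation of Chebyshev polynomials: on each unit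
eigenvector `x` of `Tᴴ S T` with eigenvalue `λ` (|λ| < 1), the compressed operator
`Tᴴ Wᵏ T` acts as multiplication by `Tₖ(λ)`. -/
theorem compressed_walk_eq_chebyshev {m n : ℕ} (T : Matrix (Fin m) (Fin n) ℂ)
    (hT : Tᴴ * T = 1) (S : Matrix (Fin m) (Fin m) ℂ) (hS : Sᴴ = S) (hS2 : S * S = 1)
    (x : Fin n → ℂ) (hx : ∑ i, starRingEnd ℂ (x i) * x i = 1)
    (lam : ℝ) (hlam : lam ^ 2 < 1) (heig : (Tᴴ * S * T).mulVec x = (lam : ℂ) • x)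
    (W : Matrix (Fin m) (Fin m) ℂ) (hW : W = S * ((2 : ℂ) • (T * Tᴴ) - 1)) :
    ∀ k : ℕ,
      Tᴴ.mulVec ((W ^ k).mulVec (T.mulVec x)) =
        (((Polynomial.Chebyshev.T ℝ (k : ℤ)).eval lam : ℝ) : ℂ) • x := by
  intro k
  set u : Fin m → ℂ := T.mulVec x with hu
  set v : Fin m → ℂ := S.mulVec u with hv
  have hTu : Tᴴ.mulVec u = x := by
    rw [hu, mulVec_mulVec, hT, one_mulVec]
  have hTv : Tᴴ.mulVec v = (lam : ℂ) • x := by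
    rw [hv, hu, mulVec_mulVec, mulVec_mulVec, heig]
  have hSv : S.mulVec v = u := by
    rw [hv, mulVec_mulVec, hS2, one_mulVec]
  have hinner_u : ((2 : ℂ) • (T * Tᴴ) - 1).mulVec u = u := by
    rw [sub_mulVec, smul_mulVec, ← mulVec_mulVec, hTu, one_mulVec, ← hu,
      two_smul, add_sub_cancel_right]
  have hWu : W.mulVec u = v := by
    rw [hW, ← mulVec_mulVec, hinner_u, hv]
  have hWv : W.mulVec v = ((2 * lam : ℝ) : ℂ) • v - u := by
    rw [hW, ← mulVec_mulVec, sub_mulVec, smul_mulVec, ← mulVec_mulVec, hTv,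
      one_mulVec]
    rw [mulVec_smul, ← hu, mulVec_sub, mulVec_smul, mulVec_smul, ← hv, hSv]
    push_cast
    rw [smul_smul]
  have key : ∀ j : ℕ, (W ^ j).mulVec u
      = (chebAux (lam : ℂ) j).1 • u + (chebAux (lam : ℂ) j).2 • v := by
    intro j
    induction j with
    | zero => simp [chebAux]
    | succ j ih =>
      rw [pow_succ', ← mulVec_mulVec, ih, mulVec_add, mulVec_smul, mulVec_smul,
        hWu, hWv]
      simp only [chebAux]
      push_cast
      module
  rw [key k, mulVec_add, mulVec_smul, mulVec_smul, hTu, hTv, ← chebAux_eq lam k]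
  module
end
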